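/- The Hermitian n×n matrix X with diagonal entries X_{jj} = 1/2 and off-diagonal entries X_{jk} = i/(2^j 3^k) for j < k (and X_{kj} = conj(X_{jk})) is positive semi-definite. -/

import Mathlib

open Complex
open scoped ComplexOrder

lemma geom_third (n : ℕ) : ∑ j : Fin n, ((1:ℝ)/3)^((j:ℕ)+1) ≤ 1/2 := by
  rw [Fin.sum_univ_eq_sum_range (fun j => ((1:ℝ)/3)^(j+1))]
  calc ∑ j ∈ Finset.range n, ((1:ℝ)/3)^(j+1)
      = (1/3) * ∑ j ∈ Finset.range n, ((1:ℝ)/3)^j := by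
        rw [Finset.mul_sum]; exact Finset.sum_congr rfl fun j _ => by ring
    _ ≤ (1/3) * (3/2) := by
        gcongr
        rw [geom_sum_eq (by norm_num : (1/3:ℝ) ≠ 1), div_le_iff_of_neg (by norm_num)]
        have := pow_nonneg (by norm_num : (0:ℝ) ≤ 1/3) n
        linarith
    _ = 1/2 := by norm_num

/-- The Hermitian matrix with diagonal entries `1/2` and off-diagonal entries
`i/(2^j 3^k)` for `j < k` (and conjugates below the diagonal) is positive semi-definite. -/
theorem stmt_7 {n : ℕ} (X : Matrix (Fin n) (Fin n) ℂ)
    (hX : ∀ j k : Fin n, X j k =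
        if j = k then 1 / 2
        else if (j : ℕ) < (k : ℕ) then I / (2 ^ ((j : ℕ) + 1) * 3 ^ ((k : ℕ) + 1))
        else -(I / (2 ^ ((k : ℕ) + 1) * 3 ^ ((j : ℕ) + 1)))) :
    X.PosSemidef := by
  have herm : X.IsHermitian := by
    ext j k
    simp only [Matrix.conjTranspose_apply, hX]
    rcases lt_trichotomy (j:ℕ) (k:ℕ) with h | h | h
    · have hne : j ≠ k := fun e => by simp [e] at h
      simp [hne, hne.symm, h, not_lt.mpr h.le, map_div₀, Complex.conj_I, neg_div]
    · simp [Fin.ext h]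
    · have hne : j ≠ k := fun e => by simp [e] at h
      simp [hne, hne.symm, h, not_lt.mpr h.le, map_div₀, Complex.conj_I, neg_div]
  refine herm.posSemidef_iff_eigenvalues_nonneg.mpr fun i => ?_
  set μ : ℝ := herm.eigenvalues i with hμ
  have hev : Module.End.HasEigenvalue (Matrix.toLin' X) (μ : ℂ) := by
    apply Module.End.hasEigenvalue_of_hasEigenvector (x := ⇑(herm.eigenvectorBasis i))
    constructor
    · rw [Module.End.mem_eigenspace_iff]
      rw [Matrix.toLin'_apply, herm.mulVec_eigenvectorBasis i]
      ext j
      simp [Complex.real_smul, hμ]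
    · intro hzero
      have : herm.eigenvectorBasis i = 0 := by
        ext j; exact congrFun hzero j
      exact (herm.eigenvectorBasis.toBasis.ne_zero i) (by simpa using this)
  obtain ⟨k, hk⟩ := eigenvalue_mem_ball hev
  rw [mem_closedBall_iff_norm'] at hk
  have hrow : ∑ j ∈ Finset.univ.erase k, ‖X k j‖ ≤ 1/4 := by
    have hbound : ∀ j ∈ Finset.univ.erase k, ‖X k j‖ ≤ (1/2) * ((1:ℝ)/3)^((j:ℕ)+1) := by
      intro j hj
      have hne : k ≠ j := fun e => (Finset.mem_erase.mp hj).1 e.symm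
      have hrhs : (1/2 : ℝ) * ((1:ℝ)/3)^((j:ℕ)+1) = 1 / (2 * 3^((j:ℕ)+1)) := by
        rw [one_div_pow, div_mul_div_comm, one_mul]
      rw [hX, hrhs]
      rcases lt_or_gt_of_ne (fun e => hne (Fin.ext e) : (k:ℕ) ≠ (j:ℕ)) with h | h
      · -- k < j : entry I/(2^{k+1} 3^{j+1})
        simp only [if_neg hne, if_pos h]
        rw [norm_div, Complex.norm_I, norm_mul]
        have h2 : ‖(2:ℂ)^((k:ℕ)+1)‖ = 2^((k:ℕ)+1) := by rw [norm_pow]; norm_num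
        have h3 : ‖(3:ℂ)^((j:ℕ)+1)‖ = 3^((j:ℕ)+1) := by rw [norm_pow]; norm_num
        rw [h2, h3]
        apply one_div_le_one_div_of_le (by positivity)
        gcongr
        calc (2:ℝ) = 2^1 := by norm_num
          _ ≤ 2^((k:ℕ)+1) := by apply pow_le_pow_right₀ <;> norm_num
      · -- j < k : entry -(I/(2^{j+1} 3^{k+1}))
        simp only [if_neg hne, if_neg (not_lt.mpr h.le)]
        rw [norm_neg, norm_div, Complex.norm_I, norm_mul]
        have h2 : ‖(2:ℂ)^((j:ℕ)+1)‖ = 2^((j:ℕ)+1) := by rw [norm_pow]; norm_num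
        have h3 : ‖(3:ℂ)^((k:ℕ)+1)‖ = 3^((k:ℕ)+1) := by rw [norm_pow]; norm_num
        rw [h2, h3]
        apply one_div_le_one_div_of_le (by positivity)
        have e2 : (2:ℝ) ≤ 2^((j:ℕ)+1) := by
          calc (2:ℝ) = 2^1 := by norm_num
            _ ≤ 2^((j:ℕ)+1) := by apply pow_le_pow_right₀ <;> norm_num
        have e3 : (3:ℝ)^((j:ℕ)+1) ≤ 3^((k:ℕ)+1) := by
          apply pow_le_pow_right₀ (by norm_num); omega
        exact mul_le_mul e2 e3 (by positivity) (by positivity)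
    calc ∑ j ∈ Finset.univ.erase k, ‖X k j‖
        ≤ ∑ j ∈ Finset.univ.erase k, (1/2) * ((1:ℝ)/3)^((j:ℕ)+1) :=
          Finset.sum_le_sum hbound
      _ ≤ ∑ j : Fin n, (1/2) * ((1:ℝ)/3)^((j:ℕ)+1) := by
          apply Finset.sum_le_sum_of_subset_of_nonneg (Finset.erase_subset _ _)
          intro j _ _; positivity
      _ = (1/2) * ∑ j : Fin n, ((1:ℝ)/3)^((j:ℕ)+1) := by rw [Finset.mul_sum]
      _ ≤ (1/2) * (1/2) := by gcongr; exact geom_third n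
      _ = 1/4 := by norm_num
  have hdiag : X k k = 1/2 := by rw [hX]; simp
  rw [hdiag] at hk
  have h14 : ‖(μ:ℂ) - 1/2‖ ≤ 1/4 := by rw [norm_sub_rev]; exact le_trans hk hrow
  have habs : |μ - 1/2| ≤ 1/4 := by
    have h2 : ‖((μ - 1/2 : ℝ) : ℂ)‖ ≤ 1/4 := by push_cast; simpa using h14
    rwa [Complex.norm_real, Real.norm_eq_abs] at h2
  linarith [(abs_le.mp habs).1, show (0 : Fin n → ℝ) i = 0 from rfl]
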